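/- Let n ≥ 1 and let p be a 132-avoiding permutation of [n]. For every i with 1 ≤ i ≤ n−1, i is a descent of p (i.e., p(i) > p(i+1)) if and only if p(i+1) is a left-to-right minimum of p, i.e., p(i+1) < p(j) for all j ≤ i. Consequently, for 132-avoiding permutations p and q, Des(p) ⊆ Des(q) if and only if the set of positions of left-to-right minima of p is contained in the set of positions of left-to-right minima of q. -/
import Mathlib


/-- A permutation `p` of `[n]` (positions and values in `Fin n`, 0-based) is
132-avoiding if there are no positions `a < b < c` with `p a < p c < p b`. -/
def Avoids132 {n : ℕ} (p : Equiv.Perm (Fin n)) : Prop :=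
  ∀ a b c : Fin n, a < b → b < c → ¬ (p a < p c ∧ p c < p b)

/-- The descent set of `p`, as a set of 1-based positions `i ∈ [n-1]`:
`i` is a descent iff `p(i) > p(i+1)`, i.e. (0-based) `p ⟨i-1⟩ > p ⟨i⟩`. -/
def Des {n : ℕ} (p : Equiv.Perm (Fin n)) : Set ℕ :=
  {i | ∃ h : 1 ≤ i ∧ i < n,
        p ⟨i, h.2⟩ < p ⟨i - 1, Nat.lt_of_le_of_lt (Nat.sub_le i 1) h.2⟩}

/-- The set of 1-based positions `j ∈ [n]` at which `p` has a left-to-right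
minimum, i.e. `p(j) < p(i)` for all `i < j`. -/
def LRMinPos {n : ℕ} (p : Equiv.Perm (Fin n)) : Set ℕ :=
  {j | ∃ h : 1 ≤ j ∧ j ≤ n,
        ∀ i : Fin n, (i : ℕ) < j - 1 →
          p ⟨j - 1, Nat.lt_of_lt_of_le (Nat.sub_lt h.1 Nat.one_pos) h.2⟩ < p i}

/-- In a 132-avoiding permutation, `i ∈ [n-1]` is a descent iff the entry in
position `i+1` is a left-to-right minimum; consequently, for 132-avoiding
`p`, `q`: `Des p ⊆ Des q` iff the positions of left-to-right minima of `p`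
are contained in those of `q`. -/
theorem stmt0 (n : ℕ) (hn : 1 ≤ n) :
    (∀ p : Equiv.Perm (Fin n), Avoids132 p →
      ∀ i : ℕ, (h : 1 ≤ i ∧ i < n) →
        (p ⟨i, h.2⟩ < p ⟨i - 1, Nat.lt_of_le_of_lt (Nat.sub_le i 1) h.2⟩ ↔
          ∀ j : Fin n, (j : ℕ) < i → p ⟨i, h.2⟩ < p j)) ∧
    (∀ p q : Equiv.Perm (Fin n), Avoids132 p → Avoids132 q →
      (Des p ⊆ Des q ↔ LRMinPos p ⊆ LRMinPos q)) := by
  have key : ∀ p : Equiv.Perm (Fin n), Avoids132 p →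
      ∀ i : ℕ, (h : 1 ≤ i ∧ i < n) →
        (p ⟨i, h.2⟩ < p ⟨i - 1, Nat.lt_of_le_of_lt (Nat.sub_le i 1) h.2⟩ ↔
          ∀ j : Fin n, (j : ℕ) < i → p ⟨i, h.2⟩ < p j) := by
    intro p hp i h
    constructor
    · intro hd j hj
      rcases lt_trichotomy ((j : ℕ)) (i - 1) with hlt | heq | hgt
      · by_contra hle
        push_neg at hle
        have hne : p j ≠ p ⟨i, h.2⟩ := by
          intro he
          have : (j : ℕ) = i := congrArg Fin.val (p.injective he)
          omega
        have hlt' : p j < p ⟨i, h.2⟩ := lt_of_le_of_ne hle hne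
        exact hp j ⟨i - 1, Nat.lt_of_le_of_lt (Nat.sub_le i 1) h.2⟩ ⟨i, h.2⟩
          hlt (Nat.sub_lt h.1 Nat.one_pos) ⟨hlt', hd⟩
      · have : j = ⟨i - 1, Nat.lt_of_le_of_lt (Nat.sub_le i 1) h.2⟩ := Fin.ext heq
        rw [this]; exact hd
      · omega
    · intro haf
      exact haf ⟨i - 1, Nat.lt_of_le_of_lt (Nat.sub_le i 1) h.2⟩
        (Nat.sub_lt h.1 Nat.one_pos)
  refine ⟨key, ?_⟩
  intro p q hp hq
  constructor
  · intro hsub j hj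
    obtain ⟨⟨hj1, hj2⟩, hjmin⟩ := hj
    by_cases h1 : j = 1
    · subst h1
      exact ⟨⟨le_refl 1, hn⟩, fun i hi => absurd hi (by omega)⟩
    · have h2 : 2 ≤ j := by omega
      have hdp : j - 1 ∈ Des p := by
        refine ⟨⟨by omega, by omega⟩, ?_⟩
        exact (key p hp (j - 1) ⟨by omega, by omega⟩).mpr hjmin
      obtain ⟨hq1, hdq⟩ := hsub hdp
      refine ⟨⟨hj1, hj2⟩, ?_⟩
      exact (key q hq (j - 1) hq1).mp hdq
  · intro hsub i hi
    obtain ⟨⟨h1, h2⟩, hd⟩ := hi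
    have hlp : i + 1 ∈ LRMinPos p := by
      refine ⟨⟨by omega, by omega⟩, fun k hk => ?_⟩
      exact (key p hp i ⟨h1, h2⟩).mp hd k hk
    obtain ⟨hq1, hmin⟩ := hsub hlp
    exact ⟨⟨h1, h2⟩, (key q hq i ⟨h1, h2⟩).mpr (fun k hk => hmin k hk)⟩
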